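/- Let p be a prime, i an integer with 1 ≤ i ≤ p-1, and k a positive integer. Then for every integer l ≥ k, the p-adic valuation of the rational number (k!/l!) · S(l,k)_{≤i} is nonnegative; equivalently, v_p(k! · S(l,k)_{≤i}) ≥ v_p(l!). -/

import Mathlib

/-- `r`-restricted Stirling number of the second kind: number of partitions of an
`n`-set into `k` nonempty blocks, each of size at most `r`. -/
noncomputable def stirlingRes (n k r : ℕ) : ℕ :=
  Nat.card {P : Finpartition (Finset.univ : Finset (Fin n)) //
    P.parts.card = k ∧ ∀ b ∈ P.parts, b.card ≤ r}

open Finset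

lemma perm_fix (p i l k : ℕ) (hp : p.Prime) (hilt : i < p) (σ : Equiv.Perm (Fin l))
    (n : ℕ) (hσ : σ ^ (p ^ n) = 1) (f : Fin l → Fin k)
    (hf : ∀ x, f (σ x) = f x)
    (hcard : ∀ j, (univ.filter (fun x => f x = j)).card ≤ i) : σ = 1 := by
  ext x
  have hper : Function.IsPeriodicPt σ (p ^ n) x := by
    unfold Function.IsPeriodicPt Function.IsFixedPt
    rw [Equiv.Perm.iterate_eq_pow, hσ]
    rfl
  have hdvd : Function.minimalPeriod σ x ∣ p ^ n := hper.minimalPeriod_dvd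
  obtain ⟨e, _, hde⟩ := (Nat.dvd_prime_pow hp).mp hdvd
  -- iterates stay in the fiber
  have hfib : ∀ m : ℕ, f (σ^[m] x) = f x := by
    intro m
    induction m with
    | zero => rfl
    | succ m ih => rw [Function.iterate_succ_apply', hf, ih]
  have hinj : Set.InjOn (fun m => σ^[m] x) (Set.Iio (p ^ e)) := by
    rw [← hde]
    exact Function.iterate_injOn_Iio_minimalPeriod
  have hle : p ^ e ≤ i := by
    have : (Finset.range (p ^ e)).card ≤ (univ.filter (fun y => f y = f x)).card := by
      apply Finset.card_le_card_of_injOn (fun m => σ^[m] x)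
      · intro m hm
        simp only [mem_filter, mem_univ, true_and]
        simpa using hfib m
      · intro a ha b hb hab
        exact hinj (by simpa using Finset.mem_range.mp ha) (by simpa using Finset.mem_range.mp hb) hab
    simpa using this.trans (hcard _)
  have he : e = 0 := by
    by_contra h
    have : p ≤ p ^ e := Nat.le_self_pow h p
    omega
  subst he
  have h1 : Function.minimalPeriod σ x = 1 := by simpa using hde
  have h2 : σ x = x := Function.minimalPeriod_eq_one_iff_isFixedPt.mp h1
  simp [h2]

/-- The type of "ordered partitions": functions with all fibers nonempty of size ≤ i. -/
def XT (l k i : ℕ) : Type :=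
  {f : Fin l → Fin k // ∀ j, (univ.filter (fun x => f x = j)).Nonempty ∧
      (univ.filter (fun x => f x = j)).card ≤ i}

instance (l k i : ℕ) : Finite (XT l k i) := by unfold XT; infer_instance

lemma fib_comp {l k : ℕ} (σ : Equiv.Perm (Fin l)) (f : Fin l → Fin k) (j : Fin k) :
    univ.filter (fun x => f (σ⁻¹ x) = j) =
      (univ.filter (fun x => f x = j)).map σ.toEmbedding := by
  ext x
  simp [Finset.mem_map_equiv, Equiv.Perm.inv_def]

instance instSMulXT (l k i : ℕ) : SMul (Equiv.Perm (Fin l)) (XT l k i) :=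
  ⟨fun σ F => ⟨F.1 ∘ ⇑σ⁻¹, by
    intro j
    have h := fib_comp σ F.1 j
    have h' : (univ.filter (fun x => (F.1 ∘ ⇑σ⁻¹) x = j)) =
        (univ.filter (fun x => F.1 x = j)).map σ.toEmbedding := h
    rw [h']
    refine ⟨Finset.Nonempty.map (F.2 j).1, ?_⟩
    rw [Finset.card_map]
    exact (F.2 j).2⟩⟩

lemma smul_XT_coe {l k i : ℕ} (σ : Equiv.Perm (Fin l)) (F : XT l k i) :
    (σ • F).1 = F.1 ∘ ⇑σ⁻¹ := rfl

instance instMulActionXT (l k i : ℕ) : MulAction (Equiv.Perm (Fin l)) (XT l k i) where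
  one_smul F := Subtype.ext (funext fun x => by simp [smul_XT_coe])
  mul_smul σ τ F := Subtype.ext (funext fun x => by
    simp [smul_XT_coe, mul_inv_rev, Function.comp])

lemma cardB (p l k i : ℕ) [hp : Fact p.Prime] (hilt : i < p) :
    p ^ padicValNat p (Nat.factorial l) ∣ Nat.card (XT l k i) := by
  obtain ⟨Q⟩ : Nonempty (Sylow p (Equiv.Perm (Fin l))) := inferInstance
  have hstab : ∀ F : XT l k i, MulAction.stabilizer ↥Q.1 F = ⊥ := by
    intro F
    rw [eq_bot_iff]
    intro q hq
    have hq' : (q : Equiv.Perm (Fin l)) • F = F := hq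
    obtain ⟨n, hn⟩ := Q.isPGroup' q
    have hn' : ((q : ↥Q.1) : Equiv.Perm (Fin l)) ^ (p ^ n) = 1 := by
      have := congrArg (Subtype.val) hn
      simpa using this
    have hfix : ∀ x, F.1 (((q : Equiv.Perm (Fin l)))⁻¹ x) = F.1 x := by
      intro x
      have := congrFun (congrArg Subtype.val hq') x
      exact this
    have hone : ((q : Equiv.Perm (Fin l)))⁻¹ = 1 := by
      apply perm_fix p i l k hp.out hilt _ n
      · rw [inv_pow, hn', inv_one]
      · exact hfix
      · exact fun j => (F.2 j).2
    have : (q : Equiv.Perm (Fin l)) = 1 := by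
      rw [← inv_inv (q : Equiv.Perm (Fin l)), hone, inv_one]
    simpa [Subgroup.mem_bot] using Subtype.ext this
  have e : XT l k i ≃
      (MulAction.orbitRel.Quotient ↥Q.1 (XT l k i)) × ↥Q.1 :=
    (MulAction.selfEquivSigmaOrbitsQuotientStabilizer ↥Q.1 (XT l k i)).trans
      ((Equiv.sigmaCongrRight fun ω =>
        ((Subgroup.quotientEquivOfEq (hstab _)).trans
          (QuotientGroup.quotientBot (G := ↥Q.1)).toEquiv)).trans
        (Equiv.sigmaEquivProd _ _))
  have hcard : Nat.card (XT l k i) =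
      Nat.card (MulAction.orbitRel.Quotient ↥Q.1 (XT l k i)) * Nat.card ↥Q.1 := by
    rw [Nat.card_congr e, Nat.card_prod]
  have hQcard : Nat.card ↥Q.1 = p ^ padicValNat p (Nat.factorial l) := by
    rw [Sylow.card_eq_multiplicity Q]
    congr 1
    rw [Nat.card_eq_fintype_card, Fintype.card_perm, Fintype.card_fin,
      Nat.factorization_def _ hp.out]
  rw [hcard, hQcard]
  exact Dvd.intro_left _ rfl

def PT (l k i : ℕ) := {P : Finpartition (Finset.univ : Finset (Fin l)) //
    P.parts.card = k ∧ ∀ b ∈ P.parts, b.card ≤ i}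

instance (l k i : ℕ) : Finite (PT l k i) := by unfold PT; infer_instance

def fOf {l k : ℕ} (P : Finpartition (univ : Finset (Fin l)))
    (e : {b // b ∈ P.parts} ≃ Fin k) : Fin l → Fin k :=
  fun x => e ⟨P.part x, P.part_mem.mpr (mem_univ x)⟩

lemma fib_fOf {l k : ℕ} (P : Finpartition (univ : Finset (Fin l)))
    (e : {b // b ∈ P.parts} ≃ Fin k) (j : Fin k) :
    univ.filter (fun x => fOf P e x = j) = ((e.symm j : {b // b ∈ P.parts}) : Finset (Fin l)) := by
  ext x
  rw [mem_filter]
  simp only [mem_univ, true_and, fOf]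
  rw [← Equiv.eq_symm_apply]
  constructor
  · intro h
    have h2 : P.part x = ((e.symm j : {b // b ∈ P.parts}) : Finset (Fin l)) :=
      congrArg Subtype.val h
    rw [← h2]
    exact P.mem_part (mem_univ x)
  · intro hx
    exact Subtype.ext (P.part_eq_of_mem (e.symm j).2 hx)

def ΨOP (l k i : ℕ) (s : Σ P : PT l k i, {b // b ∈ P.1.parts} ≃ Fin k) : XT l k i :=
  ⟨fOf s.1.1 s.2, fun j => by
    rw [fib_fOf]
    exact ⟨s.1.1.nonempty_of_mem_parts (s.2.symm j).2, s.1.2.2 _ (s.2.symm j).2⟩⟩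

lemma parts_eq_image {l k : ℕ} (P : Finpartition (univ : Finset (Fin l)))
    (e : {b // b ∈ P.parts} ≃ Fin k) :
    P.parts = univ.image (fun j => ((e.symm j : {b // b ∈ P.parts}) : Finset (Fin l))) := by
  ext b
  constructor
  · intro hb
    refine Finset.mem_image.mpr ⟨e ⟨b, hb⟩, mem_univ _, ?_⟩
    rw [Equiv.symm_apply_apply]
  · intro hb
    obtain ⟨j, -, rfl⟩ := Finset.mem_image.mp hb
    exact (e.symm j).2

lemma ΨOP_inj (l k i : ℕ) : Function.Injective (ΨOP l k i) := by
  rintro ⟨⟨P, hP⟩, e⟩ ⟨⟨P', hP'⟩, e'⟩ h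
  have hf : fOf P e = fOf P' e' := congrArg Subtype.val h
  have hparts : P.parts = P'.parts := by
    rw [parts_eq_image P e, parts_eq_image P' e']
    apply Finset.image_congr
    intro j _
    dsimp only
    rw [← fib_fOf P e j, ← fib_fOf P' e' j, hf]
  have hPP : P = P' := Finpartition.ext hparts
  subst hPP
  have he : e = e' := by
    apply Equiv.ext
    rintro ⟨b, hb⟩
    obtain ⟨x, hx⟩ := P.nonempty_of_mem_parts hb
    have hpart : P.part x = b := P.part_eq_of_mem hb hx
    have h1 : e ⟨b, hb⟩ = fOf P e x := by
      unfold fOf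
      congr 1
      exact Subtype.ext hpart.symm
    have h2 : e' ⟨b, hb⟩ = fOf P e' x := by
      unfold fOf
      congr 1
      exact Subtype.ext hpart.symm
    rw [h1, h2, hf]
  subst he
  rfl

lemma ΨOP_surj (l k i : ℕ) : Function.Surjective (ΨOP l k i) := by
  rintro ⟨f, hf⟩
  have fib_inj : Function.Injective (fun j => univ.filter (fun x => f x = j)) := by
    intro j1 j2 h
    obtain ⟨x, hx⟩ := (hf j1).1
    have h' : univ.filter (fun x => f x = j1) = univ.filter (fun x => f x = j2) := h
    have hx2 : x ∈ univ.filter (fun x => f x = j2) := h' ▸ hx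
    have e1 : f x = j1 := (Finset.mem_filter.mp hx).2
    have e2 : f x = j2 := (Finset.mem_filter.mp hx2).2
    rw [← e1, ← e2]
  let Pf : Finpartition (univ : Finset (Fin l)) :=
    { parts := univ.image (fun j => univ.filter (fun x => f x = j))
      supIndep := by
        rw [Finset.supIndep_iff_pairwiseDisjoint]
        intro b hb c hc hbc
        obtain ⟨j1, -, rfl⟩ := Finset.mem_image.mp (Finset.mem_coe.mp hb)
        obtain ⟨j2, -, rfl⟩ := Finset.mem_image.mp (Finset.mem_coe.mp hc)
        rw [Function.onFun, Finset.disjoint_left]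
        intro x hx1 hx2
        apply hbc
        have e1 : f x = j1 := (Finset.mem_filter.mp hx1).2
        have e2 : f x = j2 := (Finset.mem_filter.mp hx2).2
        rw [← e1, ← e2]
      sup_parts := by
        apply Finset.Subset.antisymm
        · intro x hx
          exact mem_univ x
        · intro x _
          rw [Finset.mem_sup]
          exact ⟨univ.filter (fun y => f y = f x),
            Finset.mem_image_of_mem _ (mem_univ (f x)), by simp⟩
      bot_notMem := by
        simp only [bot_eq_empty, Finset.mem_image]
        rintro ⟨j, -, hj⟩
        exact Finset.Nonempty.ne_empty (hf j).1 hj }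
  have hparts : Pf.parts = univ.image (fun j => univ.filter (fun x => f x = j)) := rfl
  have hmem : ∀ j, univ.filter (fun x => f x = j) ∈ Pf.parts :=
    fun j => hparts ▸ Finset.mem_image_of_mem _ (mem_univ j)
  have hcardp : Pf.parts.card = k := by
    rw [hparts, Finset.card_image_of_injective _ fib_inj, card_univ, Fintype.card_fin]
  have hle : ∀ b ∈ Pf.parts, b.card ≤ i := by
    intro b hb
    rw [hparts] at hb
    obtain ⟨j, -, rfl⟩ := Finset.mem_image.mp hb
    exact (hf j).2
  let g : Fin k → {b // b ∈ Pf.parts} := fun j => ⟨_, hmem j⟩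
  have hg : Function.Bijective g := by
    constructor
    · intro a b hab
      exact fib_inj (congrArg Subtype.val hab)
    · rintro ⟨b, hb⟩
      rw [hparts] at hb
      obtain ⟨j, -, rfl⟩ := Finset.mem_image.mp hb
      exact ⟨j, rfl⟩
  let E := Equiv.ofBijective g hg
  refine ⟨⟨⟨Pf, hcardp, hle⟩, E.symm⟩, ?_⟩
  apply Subtype.ext
  funext x
  show fOf Pf E.symm x = f x
  unfold fOf
  have hpart : Pf.part x = univ.filter (fun y => f y = f x) :=
    Pf.part_eq_of_mem (hmem (f x)) (by simp)
  have hsub : (⟨Pf.part x, Pf.part_mem.mpr (mem_univ x)⟩ : {b // b ∈ Pf.parts}) = g (f x) :=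
    Subtype.ext hpart
  rw [hsub]
  exact E.symm_apply_apply (f x)

lemma nat_card_sigma' {ι : Type*} [Fintype ι] {f : ι → Type*} [∀ i, Fintype (f i)] {m : ℕ}
    (h : ∀ i, Nat.card (f i) = m) : Nat.card (Σ i, f i) = Nat.card ι * m := by
  simp only [Nat.card_eq_fintype_card] at *
  rw [Fintype.card_sigma, Finset.sum_congr rfl (fun i _ => h i), Finset.sum_const, card_univ,
    smul_eq_mul]

lemma cardA (l k i : ℕ) : Nat.card (XT l k i) = stirlingRes l k i * Nat.factorial k := by
  have hbij : Function.Bijective (ΨOP l k i) := ⟨ΨOP_inj l k i, ΨOP_surj l k i⟩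
  rw [← Nat.card_congr (Equiv.ofBijective _ hbij)]
  letI : Fintype (PT l k i) := Fintype.ofFinite _
  letI : ∀ P : PT l k i, Fintype ({b // b ∈ P.1.parts} ≃ Fin k) := fun P => Fintype.ofFinite _
  have key : ∀ P : PT l k i, Nat.card ({b // b ∈ P.1.parts} ≃ Fin k) = Nat.factorial k := by
    intro P
    have e0 : {b // b ∈ P.1.parts} ≃ Fin k :=
      Fintype.equivFinOfCardEq (by rw [Fintype.card_coe, P.2.1])
    rw [Nat.card_congr (Equiv.equivCongr e0 (Equiv.refl (Fin k))), Nat.card_eq_fintype_card,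
      Fintype.card_equiv (Equiv.refl _), Fintype.card_fin]
  rw [nat_card_sigma' key]
  rfl

theorem stmt_12 (p i k l : ℕ) (hp : p.Prime) (hi1 : 1 ≤ i) (hi2 : i ≤ p - 1)
    (hk : 0 < k) (hl : k ≤ l) :
    0 ≤ padicValRat p (((Nat.factorial k) * stirlingRes l k i : ℚ) / (Nat.factorial l : ℚ)) := by
  haveI : Fact p.Prime := ⟨hp⟩
  have hilt : i < p := by have := hp.two_le; omega
  by_cases hS : stirlingRes l k i = 0
  · simp [hS]
  · have hA : Nat.card (XT l k i) = stirlingRes l k i * Nat.factorial k := cardA l k i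
    have hB := cardB p l k i hilt
    rw [hA] at hB
    have hdvd : p ^ padicValNat p (Nat.factorial l) ∣ Nat.factorial k * stirlingRes l k i := by
      rwa [mul_comm]
    have hne : (Nat.factorial k * stirlingRes l k i : ℕ) ≠ 0 :=
      Nat.mul_ne_zero (Nat.factorial_ne_zero k) hS
    have hle : padicValNat p (Nat.factorial l) ≤
        padicValNat p (Nat.factorial k * stirlingRes l k i) :=
      (padicValNat_dvd_iff_le hne).mp hdvd
    have hq : ((Nat.factorial k : ℚ) * stirlingRes l k i) ≠ 0 := by
      rw [← Nat.cast_mul]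
      exact_mod_cast hne
    have hr : ((Nat.factorial l : ℚ)) ≠ 0 := by
      exact_mod_cast Nat.factorial_ne_zero l
    rw [padicValRat.div hq hr]
    have h1 : padicValRat p ((Nat.factorial k : ℚ) * stirlingRes l k i) =
        padicValNat p (Nat.factorial k * stirlingRes l k i) := by
      rw [← Nat.cast_mul, padicValRat.of_nat]
    have h2 : padicValRat p (Nat.factorial l : ℚ) = padicValNat p (Nat.factorial l) :=
      padicValRat.of_nat
    rw [h1, h2]
    omega
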